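/- Let h > 0, let M be a symmetric positive definite n×n real matrix, μ an m×n real matrix of rank m, Q := M⁻¹μᵀ(μM⁻¹μᵀ)⁻¹μ, P := Id − Q, and let g ∈ ℝⁿ be a fixed vector (the gradient of the potential at q_k). Then for any q_{k−1}, q_k, q_{k+1} ∈ ℝⁿ, the pair of projected GNI equations PᵀM(q_{k+1} − 2q_k + q_{k−1}) = −h²Pᵀg and QᵀM((q_{k+1} − q_{k−1})/(2h)) = 0 holds if and only if q_{k+1} = q_k + (Id − 2M⁻¹QᵀM)(q_k − q_{k−1}) − h²M⁻¹Pᵀg. -/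

import Mathlib

open Matrix

/-- The two projected GNI equations at `q_k` are together equivalent to the single
explicit update
`q_{k+1} = q_k + (Id − 2M⁻¹QᵀM)(q_k − q_{k−1}) − h²M⁻¹Pᵀg`. -/
theorem gni_projected_equations_explicit_form {n m : ℕ} (h : ℝ) (hh : 0 < h)
    (M : Matrix (Fin n) (Fin n) ℝ) (hM : M.PosDef) (hMsymm : M.IsSymm)
    (μ : Matrix (Fin m) (Fin n) ℝ) (hμ : μ.rank = m)
    (Q P : Matrix (Fin n) (Fin n) ℝ)
    (hQ : Q = M⁻¹ * μᵀ * (μ * M⁻¹ * μᵀ)⁻¹ * μ) (hP : P = 1 - Q)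
    (g : Fin n → ℝ) :
    ∀ qkm qk qkp : Fin n → ℝ,
      (Pᵀ.mulVec (M.mulVec (qkp - 2 • qk + qkm)) = -((h ^ 2) • Pᵀ.mulVec g) ∧
        Qᵀ.mulVec (M.mulVec ((2 * h)⁻¹ • (qkp - qkm))) = 0) ↔
      qkp = qk + ((1 : Matrix (Fin n) (Fin n) ℝ) - (2 : ℝ) • (M⁻¹ * Qᵀ * M)).mulVec (qk - qkm)
              - (h ^ 2) • M⁻¹.mulVec (Pᵀ.mulVec g) := by
  -- invertibility of M
  have hMdet : IsUnit M.det := (Matrix.isUnit_iff_isUnit_det M).mp hM.isUnit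
  have hMMi : M * M⁻¹ = 1 := Matrix.mul_nonsing_inv M hMdet
  have hMiM : M⁻¹ * M = 1 := Matrix.nonsing_inv_mul M hMdet
  -- injectivity of μᵀ from full rank
  have hinj : Function.Injective μᵀ.mulVec := by
    rw [← Matrix.coe_mulVecLin, ← LinearMap.ker_eq_bot]
    have h1 : Matrix.rank μᵀ = m := by rw [Matrix.rank_transpose]; exact hμ
    have h2 := LinearMap.finrank_range_add_finrank_ker (Matrix.mulVecLin μᵀ)
    rw [Matrix.rank] at h1
    have h3 : Module.finrank ℝ (Fin m → ℝ) = m := by simp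
    rw [h1, h3] at h2
    have h4 : Module.finrank ℝ (LinearMap.ker μᵀ.mulVecLin) = 0 := by omega
    exact Submodule.finrank_eq_zero.mp h4
  -- A := μ M⁻¹ μᵀ is positive definite, hence invertible
  set A := μ * M⁻¹ * μᵀ with hA
  have hApos : A.PosDef := by
    have hMi : M⁻¹.PosDef := hM.inv
    have hcc : ∀ {a b : ℕ} (B : Matrix (Fin a) (Fin b) ℝ), Bᴴ = Bᵀ := by
      intro a b B; ext i j; simp [conjTranspose_apply]
    refine Matrix.PosDef.of_dotProduct_mulVec_pos ?_ ?_
    · show Aᴴ = A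
      rw [hA, conjTranspose_mul, conjTranspose_mul, hMi.isHermitian.eq, hcc, hcc,
        transpose_transpose, Matrix.mul_assoc]
    · intro x hx
      have hy : μᵀ *ᵥ x ≠ 0 := fun hy => hx (hinj (hy.trans (Matrix.mulVec_zero μᵀ).symm))
      have hpos := hMi.dotProduct_mulVec_pos hy
      have hdp : star x ⬝ᵥ (A *ᵥ x) = star (μᵀ *ᵥ x) ⬝ᵥ (M⁻¹ *ᵥ (μᵀ *ᵥ x)) := by
        rw [hA]
        simp only [star_trivial, ← Matrix.mulVec_mulVec]
        rw [Matrix.dotProduct_mulVec x μ, ← Matrix.mulVec_transpose]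
      rw [hdp]; exact hpos
  have hAdet : IsUnit A.det := (Matrix.isUnit_iff_isUnit_det A).mp hApos.isUnit
  have hAAi : A * A⁻¹ = 1 := Matrix.mul_nonsing_inv A hAdet
  -- Q is idempotent
  have h2' : μ * (M⁻¹ * (μᵀ * (A⁻¹ * μ))) = μ := by
    rw [← Matrix.mul_assoc, ← Matrix.mul_assoc, ← Matrix.mul_assoc, Matrix.mul_assoc _ A⁻¹ μ,
      ← Matrix.mul_assoc, ← hA, hAAi, Matrix.one_mul]
  have hQQ : Q * Q = Q := by
    rw [hQ]; simp only [Matrix.mul_assoc]; rw [h2']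
  have hQtQt : Qᵀ * Qᵀ = Qᵀ := by rw [← Matrix.transpose_mul, hQQ]
  have hPt : Pᵀ = 1 - Qᵀ := by rw [hP, Matrix.transpose_sub, Matrix.transpose_one]
  have hPQt : Pᵀ * Qᵀ = 0 := by rw [hPt, sub_mul, one_mul, hQtQt, sub_self]
  have hQPt : Qᵀ * Pᵀ = 0 := by rw [hPt, mul_sub, mul_one, hQtQt, sub_self]
  have hPPt : Pᵀ * Pᵀ = Pᵀ := by
    rw [hPt, mul_sub, mul_one, sub_mul, one_mul, hQtQt, sub_self, sub_zero]
  have hPQ1 : Pᵀ + Qᵀ = 1 := by rw [hPt]; abel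
  have hc : (2 * h)⁻¹ ≠ 0 := inv_ne_zero (by positivity)
  intro qkm qk qkp
  set u : Fin n → ℝ := qk - qkm with hu
  set v : Fin n → ℝ := qkp - 2 • qk + qkm with hv
  set T : Fin n → ℝ := -((2:ℝ) • ((Qᵀ * M) *ᵥ u)) - (h ^ 2) • (Pᵀ *ᵥ g) with hT
  -- projections of T
  have hPT : Pᵀ *ᵥ T = -((h ^ 2) • Pᵀ *ᵥ g) := by
    rw [hT, Matrix.mulVec_sub, Matrix.mulVec_neg, Matrix.mulVec_smul, Matrix.mulVec_smul,
      Matrix.mulVec_mulVec, Matrix.mulVec_mulVec, ← Matrix.mul_assoc, hPQt, Matrix.zero_mul,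
      hPPt, Matrix.zero_mulVec]
    module
  have hQT : Qᵀ *ᵥ T = -((2:ℝ) • ((Qᵀ * M) *ᵥ u)) := by
    rw [hT, Matrix.mulVec_sub, Matrix.mulVec_neg, Matrix.mulVec_smul, Matrix.mulVec_smul,
      Matrix.mulVec_mulVec, Matrix.mulVec_mulVec, ← Matrix.mul_assoc, hQtQt, hQPt,
      Matrix.zero_mulVec]
    module
  -- relating the difference vectors
  have hw : qkp - qkm = v + (2:ℝ) • u := by rw [hv, hu]; module
  have hMw : M *ᵥ (qkp - qkm) = M *ᵥ v + (2:ℝ) • (M *ᵥ u) := by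
    rw [hw, Matrix.mulVec_add, Matrix.mulVec_smul]
  -- E2 reformulation
  have hE2eq : Qᵀ *ᵥ (M *ᵥ ((2 * h)⁻¹ • (qkp - qkm)))
      = (2 * h)⁻¹ • (Qᵀ *ᵥ (M *ᵥ v) + (2:ℝ) • (Qᵀ *ᵥ (M *ᵥ u))) := by
    rw [Matrix.mulVec_smul, Matrix.mulVec_smul, hMw, Matrix.mulVec_add, Matrix.mulVec_smul]
  constructor
  · rintro ⟨hE1, hE2⟩
    -- from E2: Qᵀ M v = -2 Qᵀ M u
    have hQv : Qᵀ *ᵥ (M *ᵥ v) = -((2:ℝ) • ((Qᵀ * M) *ᵥ u)) := by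
      rw [hE2eq, smul_eq_zero] at hE2
      rcases hE2 with h0 | h0
      · exact absurd h0 hc
      · rw [← Matrix.mulVec_mulVec]
        linear_combination (norm := module) h0
    have hMv : M *ᵥ v = T := by
      have hsplit : M *ᵥ v = Pᵀ *ᵥ (M *ᵥ v) + Qᵀ *ᵥ (M *ᵥ v) := by
        rw [← Matrix.add_mulVec, hPQ1, Matrix.one_mulVec]
      rw [hsplit, hE1, hQv, hT]
      module
    have hvT : v = M⁻¹ *ᵥ T := by
      rw [← hMv, Matrix.mulVec_mulVec, hMiM, Matrix.one_mulVec]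
    -- conclude the explicit form
    have hexp : ((1 : Matrix (Fin n) (Fin n) ℝ) - (2 : ℝ) • (M⁻¹ * Qᵀ * M)) *ᵥ u
        = u - (2:ℝ) • (M⁻¹ *ᵥ ((Qᵀ * M) *ᵥ u)) := by
      rw [Matrix.sub_mulVec, Matrix.smul_mulVec, Matrix.one_mulVec,
        Matrix.mulVec_mulVec, Matrix.mul_assoc]
    have hMiT : M⁻¹ *ᵥ T = -((2:ℝ) • (M⁻¹ *ᵥ ((Qᵀ * M) *ᵥ u))) - (h ^ 2) • (M⁻¹ *ᵥ (Pᵀ *ᵥ g)) := by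
      rw [hT, Matrix.mulVec_sub, Matrix.mulVec_neg, Matrix.mulVec_smul, Matrix.mulVec_smul]
    have hqkp : qkp = 2 • qk - qkm + v := by rw [hv]; module
    rw [hqkp, hvT, hMiT, hexp, hu]
    module
  · intro hE
    -- derive M *ᵥ v = T from the explicit form
    have hexp : ((1 : Matrix (Fin n) (Fin n) ℝ) - (2 : ℝ) • (M⁻¹ * Qᵀ * M)) *ᵥ u
        = u - (2:ℝ) • (M⁻¹ *ᵥ ((Qᵀ * M) *ᵥ u)) := by
      rw [Matrix.sub_mulVec, Matrix.smul_mulVec, Matrix.one_mulVec,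
        Matrix.mulVec_mulVec, Matrix.mul_assoc]
    have hMiT : M⁻¹ *ᵥ T = -((2:ℝ) • (M⁻¹ *ᵥ ((Qᵀ * M) *ᵥ u))) - (h ^ 2) • (M⁻¹ *ᵥ (Pᵀ *ᵥ g)) := by
      rw [hT, Matrix.mulVec_sub, Matrix.mulVec_neg, Matrix.mulVec_smul, Matrix.mulVec_smul]
    have hvT : v = M⁻¹ *ᵥ T := by
      rw [hv, hE, hMiT, hexp, hu]
      module
    have hMv : M *ᵥ v = T := by
      rw [hvT, Matrix.mulVec_mulVec, hMMi, Matrix.one_mulVec]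
    refine ⟨by rw [hMv, hPT], ?_⟩
    rw [hE2eq, hMv, hQT, ← Matrix.mulVec_mulVec]
    rw [show -((2:ℝ) • (Qᵀ *ᵥ M *ᵥ u)) + (2:ℝ) • (Qᵀ *ᵥ M *ᵥ u) = 0 by module, smul_zero]
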